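/- arXiv:2107.05518 — 11 statements merged into one kernel-verified Lean document; each statement's English description precedes it below -/
import Mathlib

section
/- For all x in [0, 2], arccos(1 - x) ≤ π·sqrt(x/2). -/
theorem arccos_one_sub_le (x : ℝ) (hx0 : 0 ≤ x) (hx2 : x ≤ 2) :
    Real.arccos (1 - x) ≤ Real.pi * Real.sqrt (x / 2) := by
  set t := Real.sqrt (x / 2) with ht
  have ht0 : 0 ≤ t := Real.sqrt_nonneg _
  have ht1 : t ≤ 1 := by
    rw [ht, show (1:ℝ) = Real.sqrt 1 by simp]
    exact Real.sqrt_le_sqrt (by linarith)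
  have htsq : t ^ 2 = x / 2 := Real.sq_sqrt (by linarith)
  -- key: cos (π * t) ≤ 1 - x
  have hkey : Real.cos (Real.pi * t) ≤ 1 - x := by
    have hsin : t ≤ Real.sin (Real.pi / 2 * t) := Real.le_sin_mul ht0 ht1
    have hcos : Real.cos (Real.pi * t) = 1 - 2 * Real.sin (Real.pi / 2 * t) ^ 2 := by
      rw [show Real.pi * t = 2 * (Real.pi / 2 * t) by ring, Real.cos_two_mul',
        Real.cos_sq']
      ring
    nlinarith [Real.sin_nonneg_of_nonneg_of_le_pi (x := Real.pi / 2 * t)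
      (by positivity) (by nlinarith [Real.pi_pos])]
  by_contra h
  push_neg at h
  have h1 : Real.pi * t ≤ Real.pi := by nlinarith [Real.pi_pos]
  have h2 : Real.cos (Real.arccos (1 - x)) < Real.cos (Real.pi * t) := by
    apply Real.cos_lt_cos_of_nonneg_of_le_pi (by positivity) (Real.arccos_le_pi _) h
  rw [Real.cos_arccos (by linarith) (by linarith)] at h2
  linarith
end

section
/- For all x in [0, 2], arccos(1 - x) ≥ sqrt(2x). -/
theorem arccos_one_sub_ge (x : ℝ) (hx0 : 0 ≤ x) (hx2 : x ≤ 2) :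
    Real.sqrt (2 * x) ≤ Real.arccos (1 - x) := by
  set t := Real.arccos (1 - x) with ht
  have ht0 : 0 ≤ t := Real.arccos_nonneg _
  have hcos : Real.cos t = 1 - x := Real.cos_arccos (by linarith) (by linarith)
  have hineq : 1 - t ^ 2 / 2 ≤ Real.cos t := Real.one_sub_sq_div_two_le_cos
  have h2x : 2 * x ≤ t ^ 2 := by rw [hcos] at hineq; linarith
  calc Real.sqrt (2 * x) ≤ Real.sqrt (t ^ 2) := Real.sqrt_le_sqrt h2x
    _ = t := by rw [Real.sqrt_sq ht0]
end

section
/- Let R > 0 and r₁, r₂ ∈ (0, R] with r₁ + r₂ ≥ R. Then (cosh(r₁)·cosh(r₂) − cosh(R)) / (sinh(r₁)·sinh(r₂)) ≥ 1 − 2·e^{R − r₁ − r₂}. -/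
theorem cos_theta_lower_bound (R r₁ r₂ : ℝ) (hR : 0 < R)
    (hr₁ : r₁ ∈ Set.Ioc 0 R) (hr₂ : r₂ ∈ Set.Ioc 0 R) (hsum : R ≤ r₁ + r₂) :
    1 - 2 * Real.exp (R - r₁ - r₂) ≤
      (Real.cosh r₁ * Real.cosh r₂ - Real.cosh R) / (Real.sinh r₁ * Real.sinh r₂) := by
  obtain ⟨h1, _⟩ := hr₁
  obtain ⟨h2, _⟩ := hr₂
  have hs1 : 0 < Real.sinh r₁ := Real.sinh_pos_iff.2 h1
  have hs2 : 0 < Real.sinh r₂ := Real.sinh_pos_iff.2 h2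
  have hs : 0 < Real.sinh r₁ * Real.sinh r₂ := mul_pos hs1 hs2
  rw [le_div_iff₀ hs]
  set u := Real.exp (R - r₁ - r₂) with hu_def
  have hu_pos : 0 < u := Real.exp_pos _
  have hu1 : u ≤ 1 := Real.exp_le_one_iff.2 (by linarith)
  have hv_pos : 0 < Real.exp (-R) := Real.exp_pos _
  have hv1 : Real.exp (-R) ≤ 1 := Real.exp_le_one_iff.2 (by linarith)
  set v := Real.exp (-R) with hv_def
  have hcd : 1 ≤ Real.cosh (r₁ - r₂) := Real.one_le_cosh _
  -- identities
  have hca : Real.cosh (r₁ + r₂) =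
      Real.cosh r₁ * Real.cosh r₂ + Real.sinh r₁ * Real.sinh r₂ := Real.cosh_add r₁ r₂
  have hcs : Real.cosh (r₁ - r₂) =
      Real.cosh r₁ * Real.cosh r₂ - Real.sinh r₁ * Real.sinh r₂ := Real.cosh_sub r₁ r₂
  have hcoshR : Real.cosh R = (Real.exp R + Real.exp (-R)) / 2 := Real.cosh_eq R
  have hcosha : Real.cosh (r₁ + r₂) =
      (Real.exp (r₁ + r₂) + Real.exp (-(r₁ + r₂))) / 2 := Real.cosh_eq _
  -- exp product identities
  have he1 : u * Real.exp (r₁ + r₂) = Real.exp R := by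
    rw [hu_def, ← Real.exp_add]; ring_nf
  have he2 : u * Real.exp (-(r₁ + r₂)) = u * u * v := by
    rw [hu_def, hv_def, ← Real.exp_add, ← Real.exp_add, ← Real.exp_add]; ring_nf
  -- key inequality
  have key : 0 ≤ Real.cosh (r₁ - r₂) - Real.cosh R
      + u * (Real.cosh (r₁ + r₂) - Real.cosh (r₁ - r₂)) := by
    have expand : Real.cosh (r₁ - r₂) - Real.cosh R
        + u * (Real.cosh (r₁ + r₂) - Real.cosh (r₁ - r₂))
        = Real.cosh (r₁ - r₂) * (1 - u) + (u * u * v - v) / 2 := by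
      rw [hcoshR, hcosha]
      linear_combination he1 / 2 + he2 / 2
    rw [expand]
    nlinarith [mul_nonneg (sub_nonneg.2 hu1) (sub_nonneg.2 hcd),
      mul_nonneg (sub_nonneg.2 hu1) (sub_nonneg.2 hv1),
      mul_nonneg (mul_nonneg (sub_nonneg.2 hu1) hu_pos.le) (sub_nonneg.2 hv1),
      sq_nonneg (1 - u)]
  nlinarith [key, hca, hcs]
end

section
/- Let R > 0 and r₁, r₂ ∈ (0, R] with r₁ + r₂ ≥ R. Then (cosh(r₁)·cosh(r₂) − cosh(R)) / (sinh(r₁)·sinh(r₂)) ≤ 1 − 2·(e^{R − r₁ − r₂} + e^{−R − r₁ − r₂} − e^{−2r₁} − e^{−2r₂}). -/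
theorem cos_theta_upper_bound (R r₁ r₂ : ℝ) (hR : 0 < R)
    (hr₁ : r₁ ∈ Set.Ioc 0 R) (hr₂ : r₂ ∈ Set.Ioc 0 R) (hsum : R ≤ r₁ + r₂) :
    (Real.cosh r₁ * Real.cosh r₂ - Real.cosh R) / (Real.sinh r₁ * Real.sinh r₂) ≤
      1 - 2 * (Real.exp (R - r₁ - r₂) + Real.exp (-R - r₁ - r₂)
        - Real.exp (-(2 * r₁)) - Real.exp (-(2 * r₂))) := by
  obtain ⟨h1, h1R⟩ := hr₁
  obtain ⟨h2, h2R⟩ := hr₂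
  have s1 : 0 < Real.sinh r₁ := Real.sinh_pos_iff.2 h1
  have s2 : 0 < Real.sinh r₂ := Real.sinh_pos_iff.2 h2
  have hD : Real.cosh (r₁ - r₂) ≤ Real.cosh R := by
    have : |r₁ - r₂| ≤ |R| := by
      rw [abs_of_pos hR, abs_le]; constructor <;> linarith
    exact Real.cosh_le_cosh.2 this
  have hprod : 2 * (Real.exp (R - r₁ - r₂) + Real.exp (-R - r₁ - r₂)
        - Real.exp (-(2 * r₁)) - Real.exp (-(2 * r₂)))
      = 4 * Real.exp (-(r₁ + r₂)) * (Real.cosh R - Real.cosh (r₁ - r₂)) := by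
    rw [Real.cosh_eq, Real.cosh_eq,
      show R - r₁ - r₂ = R + -(r₁ + r₂) by ring,
      show -R - r₁ - r₂ = -R + -(r₁ + r₂) by ring,
      show -(2 * r₁) = -(r₁ - r₂) + -(r₁ + r₂) by ring,
      show -(2 * r₂) = (r₁ - r₂) + -(r₁ + r₂) by ring,
      Real.exp_add, Real.exp_add, Real.exp_add, Real.exp_add]
    ring
  have ha : 1 ≤ Real.exp r₁ := Real.one_le_exp h1.le
  have hb : 1 ≤ Real.exp r₂ := Real.one_le_exp h2.le
  have hes : 4 * Real.exp (-(r₁ + r₂)) * (Real.sinh r₁ * Real.sinh r₂) ≤ 1 := by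
    rw [Real.sinh_eq, Real.sinh_eq, Real.exp_neg, Real.exp_neg, Real.exp_neg, Real.exp_add]
    have pa : 0 < Real.exp r₁ := Real.exp_pos r₁
    have pb : 0 < Real.exp r₂ := Real.exp_pos r₂
    have hn1 : 0 ≤ Real.exp r₁ - (Real.exp r₁)⁻¹ := by
      have : (Real.exp r₁)⁻¹ ≤ 1 := by
        rw [inv_le_one_iff₀]; right; exact ha
      linarith
    have hn2 : 0 ≤ Real.exp r₂ - (Real.exp r₂)⁻¹ := by
      have : (Real.exp r₂)⁻¹ ≤ 1 := by
        rw [inv_le_one_iff₀]; right; exact hb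
      linarith
    have h1' : Real.exp r₁ - (Real.exp r₁)⁻¹ ≤ Real.exp r₁ := by
      have : 0 < (Real.exp r₁)⁻¹ := by positivity
      linarith
    have h2' : Real.exp r₂ - (Real.exp r₂)⁻¹ ≤ Real.exp r₂ := by
      have : 0 < (Real.exp r₂)⁻¹ := by positivity
      linarith
    have hmul : (Real.exp r₁ - (Real.exp r₁)⁻¹) / 2 * ((Real.exp r₂ - (Real.exp r₂)⁻¹) / 2)
        ≤ Real.exp r₁ * Real.exp r₂ / 4 := by
      nlinarith [mul_le_mul h1' h2' hn2 pa.le]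
    calc 4 * (Real.exp r₁ * Real.exp r₂)⁻¹ *
          ((Real.exp r₁ - (Real.exp r₁)⁻¹) / 2 * ((Real.exp r₂ - (Real.exp r₂)⁻¹) / 2))
        ≤ 4 * (Real.exp r₁ * Real.exp r₂)⁻¹ * (Real.exp r₁ * Real.exp r₂ / 4) := by
          gcongr
      _ = 1 := by field_simp
  rw [div_le_iff₀ (by positivity), hprod]
  have hid : Real.cosh r₁ * Real.cosh r₂
      = Real.sinh r₁ * Real.sinh r₂ + Real.cosh (r₁ - r₂) := by
    rw [Real.cosh_sub]; ring
  nlinarith [mul_nonneg (sub_nonneg.2 hD) (sub_nonneg.2 hes)]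
end

section
/- Let R > 0 and r₁, r₂ ∈ (0, R] with r₁ + r₂ ≥ R, and define θ(r₁, r₂) = arccos((cosh(r₁)·cosh(r₂) − cosh(R))/(sinh(r₁)·sinh(r₂))). Then θ(r₁, r₂) ≤ π·sqrt(e^{R − r₁ − r₂}). -/
open Real

lemma key_cosh_ineq {R a : ℝ} (hR : 0 < R) (ha : R ≤ a) :
    Real.cosh R - 1 ≤ Real.exp (R - a) * (Real.cosh a - 1) := by
  have hA : (1:ℝ) ≤ Real.exp R := by
    have := Real.exp_le_exp.mpr hR.le; simpa using Real.one_le_exp hR.le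
  have hB : Real.exp R ≤ Real.exp a := Real.exp_le_exp.mpr ha
  have hA0 : (0:ℝ) < Real.exp R := Real.exp_pos _
  have hB0 : (0:ℝ) < Real.exp a := Real.exp_pos _
  rw [Real.cosh_eq, Real.cosh_eq, Real.exp_sub, Real.exp_neg, Real.exp_neg]
  have h1 : ((Real.exp R + (Real.exp R)⁻¹) / 2 - 1) =
      (Real.exp R - 1) ^ 2 / (2 * Real.exp R) := by
    field_simp; ring
  have h2 : Real.exp R / Real.exp a * ((Real.exp a + (Real.exp a)⁻¹) / 2 - 1) =
      Real.exp R * (Real.exp a - 1) ^ 2 / (2 * Real.exp a ^ 2) := by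
    field_simp; ring
  rw [h1, h2, div_le_div_iff₀ (by positivity) (by positivity)]
  have key : (Real.exp R - 1) * Real.exp a ≤ (Real.exp a - 1) * Real.exp R := by
    nlinarith
  nlinarith [mul_le_mul key key (by nlinarith) (by nlinarith)]

theorem theta_upper_bound (R r₁ r₂ : ℝ) (hR : 0 < R)
    (hr₁ : r₁ ∈ Set.Ioc 0 R) (hr₂ : r₂ ∈ Set.Ioc 0 R) (hsum : R ≤ r₁ + r₂) :
    Real.arccos ((Real.cosh r₁ * Real.cosh r₂ - Real.cosh R) /
        (Real.sinh r₁ * Real.sinh r₂)) ≤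
      Real.pi * Real.sqrt (Real.exp (R - r₁ - r₂)) := by
  obtain ⟨h1, h1R⟩ := hr₁
  obtain ⟨h2, h2R⟩ := hr₂
  set t : ℝ := R - r₁ - r₂ with ht
  have htle : t ≤ 0 := by simp [ht]; linarith
  set s : ℝ := Real.sqrt (Real.exp t) with hs
  have hs0 : 0 < s := Real.sqrt_pos.mpr (Real.exp_pos _)
  have hs1 : s ≤ 1 := by
    rw [hs, show (1:ℝ) = Real.sqrt 1 by simp]
    exact Real.sqrt_le_sqrt (by simpa using Real.exp_le_one_iff.mpr htle)
  have hs2 : s ^ 2 = Real.exp t := Real.sq_sqrt (Real.exp_pos _).le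
  have hden : 0 < Real.sinh r₁ * Real.sinh r₂ :=
    mul_pos (Real.sinh_pos_iff.mpr h1) (Real.sinh_pos_iff.mpr h2)
  -- key : cosh R - cosh (r₁ - r₂) ≤ exp t * (cosh (r₁+r₂) - cosh (r₁ - r₂))
  have key := key_cosh_ineq hR hsum
  have key2 : Real.cosh R - Real.cosh (r₁ - r₂) ≤
      Real.exp t * (Real.cosh (r₁ + r₂) - Real.cosh (r₁ - r₂)) := by
    have hd : (1:ℝ) ≤ Real.cosh (r₁ - r₂) := Real.one_le_cosh _
    have he : Real.exp t ≤ 1 := Real.exp_le_one_iff.mpr htle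
    have het : R - (r₁ + r₂) = t := by rw [ht]; ring
    rw [het] at key
    nlinarith [key, mul_nonneg (by linarith : (0:ℝ) ≤ 1 - Real.exp t)
      (by linarith : (0:ℝ) ≤ Real.cosh (r₁ - r₂) - 1)]
  -- lower bound on x
  have hx : 1 - 2 * s ^ 2 ≤ (Real.cosh r₁ * Real.cosh r₂ - Real.cosh R) /
      (Real.sinh r₁ * Real.sinh r₂) := by
    rw [le_div_iff₀ hden, hs2]
    have hca : Real.cosh (r₁ + r₂) = Real.cosh r₁ * Real.cosh r₂ +
        Real.sinh r₁ * Real.sinh r₂ := Real.cosh_add r₁ r₂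
    have hcs : Real.cosh (r₁ - r₂) = Real.cosh r₁ * Real.cosh r₂ -
        Real.sinh r₁ * Real.sinh r₂ := Real.cosh_sub r₁ r₂
    nlinarith [key2]
  -- cos (π * s) ≤ 1 - 2 s²
  have hcos : Real.cos (Real.pi * s) ≤ 1 - 2 * s ^ 2 := by
    have hjordan : s ≤ Real.sin (Real.pi * s / 2) := by
      have := Real.mul_le_sin (x := Real.pi * s / 2) (by positivity)
        (by nlinarith [Real.pi_pos])
      have hpi : Real.pi ≠ 0 := Real.pi_ne_zero
      calc s = 2 / Real.pi * (Real.pi * s / 2) := by field_simp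
        _ ≤ Real.sin (Real.pi * s / 2) := this
    have h2 : Real.cos (Real.pi * s) = 1 - 2 * Real.sin (Real.pi * s / 2) ^ 2 := by
      have hpyth := Real.sin_sq_add_cos_sq (Real.pi * s / 2)
      have hc := Real.cos_two_mul (Real.pi * s / 2)
      rw [show 2 * (Real.pi * s / 2) = Real.pi * s by ring] at hc
      linarith
    rw [h2]
    have hsin0 : 0 ≤ s := hs0.le
    nlinarith [hjordan]
  have hcosle : Real.cos (Real.pi * s) ≤ (Real.cosh r₁ * Real.cosh r₂ - Real.cosh R) /
      (Real.sinh r₁ * Real.sinh r₂) := le_trans hcos hx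
  calc Real.arccos ((Real.cosh r₁ * Real.cosh r₂ - Real.cosh R) /
        (Real.sinh r₁ * Real.sinh r₂))
      ≤ Real.arccos (Real.cos (Real.pi * s)) := by
        unfold Real.arccos
        have := Real.monotone_arcsin hcosle
        linarith
    _ = Real.pi * s := Real.arccos_cos (by positivity)
        (by nlinarith [Real.pi_pos])
end

section
/- Let R > 0 and r₁, r₂ ∈ (0, R] with r₁ + r₂ ≥ R, and define θ(r₁, r₂) = arccos((cosh(r₁)·cosh(r₂) − cosh(R))/(sinh(r₁)·sinh(r₂))). Then θ(r₁, r₂) ≥ 2·sqrt(e^{R − r₁ − r₂} + e^{−R − r₁ − r₂} − e^{−2r₁} − e^{−2r₂}). -/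
lemma sqrt_two_sub_le_arccos {x : ℝ} (h1 : -1 ≤ x) (h2 : x ≤ 1) :
    Real.sqrt (2 * (1 - x)) ≤ Real.arccos x := by
  set θ := Real.arccos x with hθ
  have hθ0 : 0 ≤ θ := Real.arccos_nonneg x
  have hθπ : θ ≤ Real.pi := Real.arccos_le_pi x
  have hcos : Real.cos θ = x := Real.cos_arccos h1 h2
  have hsin0 : 0 ≤ Real.sin (θ / 2) :=
    Real.sin_nonneg_of_nonneg_of_le_pi (by linarith) (by linarith [Real.pi_pos])
  have hsinle : Real.sin (θ / 2) ≤ θ / 2 := Real.sin_le (by linarith)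
  have hsq := Real.sin_sq_eq_half_sub (θ / 2)
  rw [show 2 * (θ / 2) = θ by ring] at hsq
  have key : 2 * (1 - x) ≤ θ ^ 2 := by nlinarith
  calc Real.sqrt (2 * (1 - x)) ≤ Real.sqrt (θ ^ 2) := Real.sqrt_le_sqrt key
    _ = θ := by rw [Real.sqrt_sq hθ0]

theorem theta_lower_bound (R r₁ r₂ : ℝ) (hR : 0 < R)
    (hr₁ : r₁ ∈ Set.Ioc 0 R) (hr₂ : r₂ ∈ Set.Ioc 0 R) (hsum : R ≤ r₁ + r₂) :
    2 * Real.sqrt (Real.exp (R - r₁ - r₂) + Real.exp (-R - r₁ - r₂)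
        - Real.exp (-(2 * r₁)) - Real.exp (-(2 * r₂))) ≤
      Real.arccos ((Real.cosh r₁ * Real.cosh r₂ - Real.cosh R) /
        (Real.sinh r₁ * Real.sinh r₂)) := by
  obtain ⟨hr1p, hr1R⟩ := hr₁
  obtain ⟨hr2p, hr2R⟩ := hr₂
  set x := (Real.cosh r₁ * Real.cosh r₂ - Real.cosh R) /
      (Real.sinh r₁ * Real.sinh r₂) with hxdef
  have hs : 0 < Real.sinh r₁ * Real.sinh r₂ :=
    mul_pos (Real.sinh_pos_iff.2 hr1p) (Real.sinh_pos_iff.2 hr2p)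
  have habs : |r₁ - r₂| ≤ |R| := by
    rw [abs_of_pos hR, abs_le]; constructor <;> linarith
  have hD : Real.cosh (r₁ - r₂) ≤ Real.cosh R := by
    rw [Real.cosh_le_cosh]; exact habs
  have habs2 : |R| ≤ |r₁ + r₂| := by
    rw [abs_of_pos hR, abs_of_pos (by linarith : (0:ℝ) < r₁ + r₂)]; exact hsum
  have hE : Real.cosh R ≤ Real.cosh (r₁ + r₂) := by
    rw [Real.cosh_le_cosh]; exact habs2
  have hx1 : x ≤ 1 := by
    rw [hxdef, div_le_one hs]
    have := Real.cosh_sub r₁ r₂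
    linarith
  have hxm1 : -1 ≤ x := by
    rw [hxdef, le_div_iff₀ hs]
    have := Real.cosh_add r₁ r₂
    linarith
  set A := Real.exp (R - r₁ - r₂) + Real.exp (-R - r₁ - r₂)
      - Real.exp (-(2 * r₁)) - Real.exp (-(2 * r₂)) with hAdef
  -- identity: A = 2 * exp (-(r₁+r₂)) * (cosh R - cosh (r₁ - r₂))
  have hAid : A = 2 * Real.exp (-(r₁ + r₂)) * (Real.cosh R - Real.cosh (r₁ - r₂)) := by
    rw [hAdef, Real.cosh_eq, Real.cosh_eq]
    rw [show R - r₁ - r₂ = R + (-(r₁ + r₂)) by ring,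
        show -R - r₁ - r₂ = -R + (-(r₁ + r₂)) by ring,
        show -(2*r₁) = -(r₁ - r₂) + (-(r₁ + r₂)) by ring,
        show -(2*r₂) = (r₁ - r₂) + (-(r₁ + r₂)) by ring,
        Real.exp_add, Real.exp_add, Real.exp_add, Real.exp_add]
    ring
  have hexp : 4 * Real.exp (-(r₁ + r₂)) * (Real.sinh r₁ * Real.sinh r₂) ≤ 1 := by
    have h4s : 4 * (Real.sinh r₁ * Real.sinh r₂) ≤ Real.exp (r₁ + r₂) := by
      rw [Real.sinh_eq, Real.sinh_eq, Real.exp_add]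
      have h1 := Real.exp_pos r₁
      have h2 := Real.exp_pos r₂
      have h3 := Real.exp_pos (-r₁)
      have h4 := Real.exp_pos (-r₂)
      have e1 : Real.exp r₁ * Real.exp (-r₁) = 1 := by rw [← Real.exp_add]; simp
      have e2 : Real.exp r₂ * Real.exp (-r₂) = 1 := by rw [← Real.exp_add]; simp
      have haa : Real.exp (-r₁) ≤ Real.exp r₁ := Real.exp_le_exp.2 (by linarith)
      have hbb : Real.exp (-r₂) ≤ Real.exp r₂ := Real.exp_le_exp.2 (by linarith)
      nlinarith [mul_nonneg (sub_nonneg.2 haa) h4.le, mul_pos h3 h2, mul_pos h3 h4]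
    have hep := Real.exp_pos (r₁ + r₂)
    rw [Real.exp_neg]
    rw [show 4 * (Real.exp (r₁ + r₂))⁻¹ * (Real.sinh r₁ * Real.sinh r₂)
        = 4 * (Real.sinh r₁ * Real.sinh r₂) / Real.exp (r₁ + r₂) by ring]
    rw [div_le_one hep]
    linarith
  have hA4 : 4 * A ≤ 2 * (1 - x) := by
    have hxval : x * (Real.sinh r₁ * Real.sinh r₂)
        = Real.cosh r₁ * Real.cosh r₂ - Real.cosh R := by
      rw [hxdef]; field_simp
    have h1x : (1 - x) * (Real.sinh r₁ * Real.sinh r₂)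
        = Real.cosh R - Real.cosh (r₁ - r₂) := by
      have := Real.cosh_sub r₁ r₂
      nlinarith [hxval]
    rw [hAid]
    have hDpos : 0 ≤ Real.cosh R - Real.cosh (r₁ - r₂) := by linarith
    have key : 4 * (2 * Real.exp (-(r₁ + r₂)) * (Real.cosh R - Real.cosh (r₁ - r₂)))
        * (Real.sinh r₁ * Real.sinh r₂)
        ≤ 2 * (Real.cosh R - Real.cosh (r₁ - r₂)) := by
      nlinarith [hexp, hDpos, hs]
    have hfin : 4 * (2 * Real.exp (-(r₁ + r₂)) * (Real.cosh R - Real.cosh (r₁ - r₂)))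
        ≤ 2 * (1 - x) := by
      rw [← mul_le_mul_iff_of_pos_right hs]
      calc 4 * (2 * Real.exp (-(r₁ + r₂)) * (Real.cosh R - Real.cosh (r₁ - r₂)))
            * (Real.sinh r₁ * Real.sinh r₂)
          ≤ 2 * (Real.cosh R - Real.cosh (r₁ - r₂)) := key
        _ = 2 * ((1 - x) * (Real.sinh r₁ * Real.sinh r₂)) := by rw [h1x]
        _ = 2 * (1 - x) * (Real.sinh r₁ * Real.sinh r₂) := by ring
    exact hfin
  have hstep : 2 * Real.sqrt A ≤ Real.sqrt (2 * (1 - x)) := by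
    rw [show (2 : ℝ) * Real.sqrt A = Real.sqrt 4 * Real.sqrt A by
      rw [show (4:ℝ) = 2^2 by norm_num, Real.sqrt_sq (by norm_num : (0:ℝ) ≤ 2)]]
    rw [← Real.sqrt_mul (by norm_num) A]
    exact Real.sqrt_le_sqrt hA4
  exact hstep.trans (sqrt_two_sub_le_arccos hxm1 hx1)
end

section
/- Let R ≥ 1 and r₁, r₂ ∈ (0, R] with r₁ + r₂ ≥ R and |r₁ − r₂| ≤ R − 1, and define θ(r₁, r₂) = arccos((cosh(r₁)·cosh(r₂) − cosh(R))/(sinh(r₁)·sinh(r₂))). Then sqrt(e^{R − r₁ − r₂}) ≤ θ(r₁, r₂) ≤ π·sqrt(e^{R − r₁ − r₂}). -/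
private lemma arccos_anti {x y : ℝ} (h : x ≤ y) : Real.arccos y ≤ Real.arccos x := by
  unfold Real.arccos
  linarith [Real.monotone_arcsin h]

theorem theta_two_sided_bound (R r₁ r₂ : ℝ) (hR : 1 ≤ R)
    (hr₁ : r₁ ∈ Set.Ioc 0 R) (hr₂ : r₂ ∈ Set.Ioc 0 R) (hsum : R ≤ r₁ + r₂)
    (hdiff : |r₁ - r₂| ≤ R - 1) :
    Real.sqrt (Real.exp (R - r₁ - r₂)) ≤
        Real.arccos ((Real.cosh r₁ * Real.cosh r₂ - Real.cosh R) /
          (Real.sinh r₁ * Real.sinh r₂)) ∧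
      Real.arccos ((Real.cosh r₁ * Real.cosh r₂ - Real.cosh R) /
          (Real.sinh r₁ * Real.sinh r₂)) ≤
        Real.pi * Real.sqrt (Real.exp (R - r₁ - r₂)) := by
  obtain ⟨h1, h1R⟩ := hr₁
  obtain ⟨h2, h2R⟩ := hr₂
  set x := (Real.cosh r₁ * Real.cosh r₂ - Real.cosh R) / (Real.sinh r₁ * Real.sinh r₂) with hx
  set t := Real.sqrt (Real.exp (R - r₁ - r₂)) with ht
  have hu1 : Real.exp (R - r₁ - r₂) ≤ 1 := Real.exp_le_one_iff.mpr (by linarith)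
  have hu0 : 0 < Real.exp (R - r₁ - r₂) := Real.exp_pos _
  have ht2 : t ^ 2 = Real.exp (R - r₁ - r₂) := Real.sq_sqrt hu0.le
  have ht0 : 0 ≤ t := Real.sqrt_nonneg _
  clear_value x t
  have ht1 : t ≤ 1 := by nlinarith only [ht2, hu1, ht0]
  -- sinh/cosh product identities
  have hS : Real.sinh r₁ * Real.sinh r₂
      = (Real.cosh (r₁ + r₂) - Real.cosh (r₁ - r₂)) / 2 := by
    rw [Real.cosh_add, Real.cosh_sub]; ring
  have hC : Real.cosh r₁ * Real.cosh r₂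
      = (Real.cosh (r₁ + r₂) + Real.cosh (r₁ - r₂)) / 2 := by
    rw [Real.cosh_add, Real.cosh_sub]; ring
  have hSpos : 0 < Real.sinh r₁ * Real.sinh r₂ :=
    mul_pos (Real.sinh_pos_iff.mpr h1) (Real.sinh_pos_iff.mpr h2)
  have hsd : Real.cosh (r₁ - r₂) < Real.cosh (r₁ + r₂) := by rw [hS] at hSpos; linarith
  -- cosh (r₁ - r₂) ≤ cosh (R-1)
  have hdR : Real.cosh (r₁ - r₂) ≤ Real.cosh (R - 1) := by
    rw [Real.cosh_le_cosh, abs_of_nonneg (by linarith : (0:ℝ) ≤ R - 1)]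
    exact hdiff
  have hd1 : 1 ≤ Real.cosh (r₁ - r₂) := Real.one_le_cosh _
  -- 4 cosh(R-1) ≤ 3 cosh R
  have hkey0 : 4 * Real.cosh (R - 1) ≤ 3 * Real.cosh R := by
    rw [Real.cosh_eq, Real.cosh_eq]
    have ha : Real.exp 1 ≤ Real.exp R := Real.exp_le_exp.mpr hR
    have he : (2.7182818283 : ℝ) < Real.exp 1 := Real.exp_one_gt_d9.trans_le' (by norm_num)
    have hb : Real.exp R * Real.exp (-R) = 1 := by rw [← Real.exp_add]; simp
    have e1 : Real.exp (R - 1) * Real.exp 1 = Real.exp R := by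
      rw [← Real.exp_add]; ring_nf
    have e2 : Real.exp (-(R - 1)) = Real.exp 1 * Real.exp (-R) := by
      rw [← Real.exp_add]; ring_nf
    have he1 : 0 < Real.exp 1 := Real.exp_pos 1
    have hbR : 0 < Real.exp (-R) := Real.exp_pos _
    have hRm1 : 0 < Real.exp (R - 1) := Real.exp_pos _
    rw [e2]
    nlinarith [sq_nonneg (Real.exp R - Real.exp 1), mul_pos hRm1 hbR]
  -- exponential expansion facts
  have e3 : Real.exp (R - r₁ - r₂) * Real.exp (r₁ + r₂) = Real.exp R := by
    rw [← Real.exp_add]; ring_nf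
  have e4 : Real.exp (R - r₁ - r₂) * Real.exp (-(r₁ + r₂))
      = Real.exp (R - r₁ - r₂) * Real.exp (R - r₁ - r₂) * Real.exp (-R) := by
    rw [← Real.exp_add, ← Real.exp_add, ← Real.exp_add]; ring_nf
  have hcs : Real.exp (R - r₁ - r₂) * Real.cosh (r₁ + r₂)
      = (Real.exp R + Real.exp (R - r₁ - r₂) * Real.exp (R - r₁ - r₂) * Real.exp (-R)) / 2 := by
    rw [Real.cosh_eq]
    linear_combination (e3 + e4) / 2
  have hcR : Real.cosh R = (Real.exp R + Real.exp (-R)) / 2 := Real.cosh_eq R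
  have heR : Real.exp (-R) ≤ 1 := Real.exp_le_one_iff.mpr (by linarith)
  have heRpos : 0 < Real.exp (-R) := Real.exp_pos _
  -- core upper inequality (I)
  have expand : Real.cosh R - Real.exp (R - r₁ - r₂) * Real.cosh (r₁ + r₂)
      = Real.exp (-R) * (1 - Real.exp (R - r₁ - r₂) * Real.exp (R - r₁ - r₂)) / 2 := by
    rw [hcs, hcR]; ring
  have hau : Real.exp (-R) * Real.exp (R - r₁ - r₂) ≤ 1 :=
    mul_le_one₀ heR hu0.le hu1
  have hstep : Real.exp (-R) * (1 + Real.exp (R - r₁ - r₂)) / 2 ≤ 1 := by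
    linarith only [heR, hau]
  have hI : Real.cosh R - Real.cosh (r₁ - r₂)
      ≤ Real.exp (R - r₁ - r₂) * (Real.cosh (r₁ + r₂) - Real.cosh (r₁ - r₂)) := by
    have key : 0 ≤ (1 - Real.exp (R - r₁ - r₂)) *
        (Real.cosh (r₁ - r₂) - Real.exp (-R) * (1 + Real.exp (R - r₁ - r₂)) / 2) :=
      mul_nonneg (by linarith) (by linarith)
    linarith only [expand, key]
  -- core lower inequality (II)
  have hII : Real.exp (R - r₁ - r₂) * (Real.cosh (r₁ + r₂) - Real.cosh (r₁ - r₂))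
      ≤ 4 * (Real.cosh R - Real.cosh (r₁ - r₂)) := by
    have h3 : Real.exp (R - r₁ - r₂) * Real.cosh (r₁ + r₂) ≤ Real.cosh R := by
      rw [hcs, hcR]
      have h5 : Real.exp (R - r₁ - r₂) * Real.exp (R - r₁ - r₂) * Real.exp (-R)
          ≤ Real.exp (-R) := by
        nlinarith only [hu1, hu0.le, heRpos.le, mul_le_one₀ hu1 hu0.le hu1]
      linarith only [h5]
    linarith only [h3, hdR, hkey0, mul_pos hu0 (lt_of_lt_of_le one_pos hd1)]
  -- 1 - x
  have hxval : 1 - x = (Real.cosh R - Real.cosh (r₁ - r₂)) / (Real.sinh r₁ * Real.sinh r₂) := by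
    rw [hx]
    field_simp
    linear_combination hS - hC
  have hA_le : 1 - x ≤ 2 * t ^ 2 := by
    rw [hxval, ht2, div_le_iff₀ hSpos, hS]
    linarith [hI]
  have hA_ge : t ^ 2 / 2 ≤ 1 - x := by
    rw [hxval, ht2, le_div_iff₀ hSpos, hS]
    linarith [hII]
  have hx1 : x ≤ 1 := by linarith only [hA_ge, ht2, hu0]
  have hxm1 : -1 ≤ x := by linarith only [hA_le, ht2, hu1]
  constructor
  · -- lower bound: t ≤ arccos x
    have hcost : x ≤ Real.cos t := by
      have h6 := Real.one_sub_sq_div_two_le_cos (x := t)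
      linarith only [h6, hA_ge]
    calc t = Real.arccos (Real.cos t) :=
          (Real.arccos_cos ht0 (by linarith [Real.pi_gt_three])).symm
    _ ≤ Real.arccos x := arccos_anti hcost
  · -- upper bound: arccos x ≤ π * t
    have hpi : 0 < Real.pi := Real.pi_pos
    have hptpi : Real.pi * t ≤ Real.pi := by nlinarith only [ht1, hpi, ht0]
    have hsin : t ≤ Real.sin (Real.pi * t / 2) := by
      have h := Real.mul_le_sin (x := Real.pi * t / 2) (by positivity) (by linarith only [hptpi])
      calc t = 2 / Real.pi * (Real.pi * t / 2) := by field_simp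
      _ ≤ Real.sin (Real.pi * t / 2) := h
    have hcospt : Real.cos (Real.pi * t) ≤ x := by
      have h2 : Real.cos (2 * (Real.pi * t / 2))
          = Real.cos (Real.pi * t / 2) ^ 2 - Real.sin (Real.pi * t / 2) ^ 2 :=
        Real.cos_two_mul' _
      have h3 := Real.sin_sq_add_cos_sq (Real.pi * t / 2)
      have h4 : 2 * (Real.pi * t / 2) = Real.pi * t := by ring
      rw [h4] at h2
      have hss : t ^ 2 ≤ Real.sin (Real.pi * t / 2) ^ 2 := by nlinarith only [hsin, ht0]
      linarith only [h2, h3, hA_le, hss]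
    calc Real.arccos x ≤ Real.arccos (Real.cos (Real.pi * t)) := arccos_anti hcospt
    _ = Real.pi * t := Real.arccos_cos (by positivity) hptpi
end

section
/- For every x with 0 ≤ x ≤ 1 and every ρ ∈ (0, 1/2] with x ≤ 2ρ, arsinh(x) ≥ (1 − ρ/(1 + 4ρ²)^{3/2})·x. -/
lemma arsinh_cubic_lb (x : ℝ) (hx0 : 0 ≤ x) (hx1 : x ≤ 1) :
    x - x ^ 3 / 6 ≤ Real.arsinh x := by
  set f : ℝ → ℝ := fun t => Real.arsinh t + t ^ 3 / 6 - t with hf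
  have hmono : MonotoneOn f (Set.Icc 0 1) := by
    apply monotoneOn_of_deriv_nonneg (convex_Icc 0 1)
    · exact (Real.continuous_arsinh.add (by continuity)).sub continuous_id |>.continuousOn
    · intro t ht
      exact ((Real.differentiable_arsinh.add ((differentiable_pow 3).div_const 6)).sub
        differentiable_id).differentiableAt.differentiableWithinAt
    · intro t ht
      simp only [interior_Icc, Set.mem_Ioo] at ht
      have hd : HasDerivAt f ((Real.sqrt (1 + t ^ 2))⁻¹ + t ^ 2 / 2 - 1) t := by
        have h1 : HasDerivAt (fun t : ℝ => t ^ 3 / 6) (t ^ 2 / 2) t := by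
          have := (hasDerivAt_pow 3 t).div_const 6
          exact this.congr_deriv (by rw [show (3:ℕ) - 1 = 2 from rfl]; push_cast; ring)
        exact ((Real.hasDerivAt_arsinh t).add h1).sub (hasDerivAt_id t)
      rw [hd.deriv]
      have hs0 : (0:ℝ) < Real.sqrt (1 + t ^ 2) := Real.sqrt_pos.2 (by positivity)
      have hs : Real.sqrt (1 + t ^ 2) ^ 2 = 1 + t ^ 2 := Real.sq_sqrt (by positivity)
      have h2 : Real.sqrt (1 + t ^ 2) * (1 - t ^ 2 / 2) ≤ 1 := by
        nlinarith [sq_nonneg (Real.sqrt (1 + t ^ 2) - 1 - t ^ 2 / 2), sq_nonneg t,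
          ht.1.le, ht.2.le, sq_nonneg (t * (1 - t))]
      have h3 : 1 - t ^ 2 / 2 ≤ (Real.sqrt (1 + t ^ 2))⁻¹ := by
        rw [inv_eq_one_div, le_div_iff₀ hs0]
        nlinarith
      linarith
  have h0 : f 0 ≤ f x := hmono (by simp) (by constructor <;> assumption) hx0
  simp only [hf, Real.arsinh_zero] at h0
  norm_num at h0
  linarith

theorem arsinh_taylor_lower_bound (x ρ : ℝ) (hx0 : 0 ≤ x) (hx1 : x ≤ 1)
    (hρ0 : 0 < ρ) (hρ : ρ ≤ 1 / 2) (hxρ : x ≤ 2 * ρ) :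
    (1 - ρ / (1 + 4 * ρ ^ 2) ^ ((3 : ℝ) / 2)) * x ≤ Real.arsinh x := by
  have key := arsinh_cubic_lb x hx0 hx1
  -- it suffices: x^3/6 ≤ ρ / (1+4ρ²)^{3/2} * x
  set c := (1 + 4 * ρ ^ 2) ^ ((3 : ℝ) / 2) with hc
  have hbase : (1:ℝ) ≤ 1 + 4 * ρ ^ 2 := by nlinarith
  have hc0 : 0 < c := Real.rpow_pos_of_pos (by linarith) _
  have hcsq : c ^ 2 = (1 + 4 * ρ ^ 2) ^ 3 := by
    rw [hc, ← Real.rpow_natCast _ 2, ← Real.rpow_mul (by linarith), ← Real.rpow_natCast (1 + 4 * ρ ^ 2) 3]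
    norm_num
  -- need x^2 ≤ 6 ρ / c, i.e. x^2 * c ≤ 6 ρ
  have hle : x ^ 3 / 6 ≤ ρ / c * x := by
    rw [div_mul_eq_mul_div, div_le_div_iff₀ (by norm_num) hc0]
    -- x^3 * c ≤ ρ * x * 6
    have h8 : c ^ 2 ≤ 8 := by
      rw [hcsq]
      have hu : 1 + 4 * ρ ^ 2 ≤ 2 := by nlinarith
      calc (1 + 4 * ρ ^ 2) ^ 3 ≤ 2 ^ 3 := pow_le_pow_left₀ (by positivity) hu 3
        _ = 8 := by norm_num
    have hcle : c ≤ 3 := by nlinarith [h8, hc0, sq_nonneg (c - 3)]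
    nlinarith [sq_nonneg x, hx0, hxρ, hρ0.le, hcle, hc0.le, mul_nonneg (mul_nonneg hx0 hx0) hx0]
  calc (1 - ρ / c) * x = x - ρ / c * x := by ring
    _ ≤ x - x ^ 3 / 6 := by linarith
    _ ≤ Real.arsinh x := key
end

section
/- Every Euclidean unit disk graph is a hyperbolic unit disk graph: if a finite graph G admits a map φ_E : V → ℝ² and threshold R_E > 0 such that {u,v} is an edge iff ‖φ_E(u) − φ_E(v)‖ ≤ R_E, and moreover non-adjacent pairs satisfy ‖φ_E(u) − φ_E(v)‖ > τ·R_E for some fixed τ > 1, then there exist a map φ_H : V → 𝔻 into the Poincaré disk and a threshold R_H > 0 such that {u,v} is an edge iff d_𝔻(φ_H(u), φ_H(v)) ≤ R_H. -/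
/-- Hyperbolic distance in the Poincaré disk model (for points of norm `< 1`). -/
noncomputable def poincareDist (p q : EuclideanSpace ℝ (Fin 2)) : ℝ :=
  2 * Real.arsinh (‖p - q‖ / Real.sqrt ((1 - ‖p‖ ^ 2) * (1 - ‖q‖ ^ 2)))

theorem euclidean_udg_is_hyperbolic_udg {V : Type*} [Fintype V] (G : SimpleGraph V)
    (φE : V → EuclideanSpace ℝ (Fin 2)) (R_E τ : ℝ) (hRE : 0 < R_E) (hτ : 1 < τ)
    (hrep : ∀ u v : V, u ≠ v → (G.Adj u v ↔ ‖φE u - φE v‖ ≤ R_E))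
    (hgap : ∀ u v : V, u ≠ v → ¬ G.Adj u v → τ * R_E < ‖φE u - φE v‖) :
    ∃ (φH : V → EuclideanSpace ℝ (Fin 2)) (R_H : ℝ), 0 < R_H ∧
      (∀ v : V, ‖φH v‖ < 1) ∧
      ∀ u v : V, u ≠ v → (G.Adj u v ↔ poincareDist (φH u) (φH v) ≤ R_H) := by
  have hτ0 : 0 < τ := lt_trans one_pos hτ
  set M : ℝ := ((Finset.univ.sup fun v => ‖φE v‖₊ : NNReal) : ℝ) with hMdef
  have hM0 : 0 ≤ M := NNReal.coe_nonneg _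
  have hMle : ∀ v, ‖φE v‖ ≤ M := by
    intro v
    have := Finset.le_sup (f := fun v => ‖φE v‖₊) (Finset.mem_univ v)
    calc ‖φE v‖ = ((‖φE v‖₊ : NNReal) : ℝ) := (coe_nnnorm _).symm
      _ ≤ M := NNReal.coe_le_coe.mpr this
  set r : ℝ := Real.sqrt ((τ - 1) / (2 * τ)) with hrdef
  have harg : 0 < (τ - 1) / (2 * τ) := div_pos (by linarith) (by linarith)
  have hr0 : 0 < r := Real.sqrt_pos.mpr harg
  have hr2 : r ^ 2 = (τ - 1) / (2 * τ) := Real.sq_sqrt harg.le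
  have hr2lt : r ^ 2 < 1 := by
    rw [hr2, div_lt_one (by linarith)]; linarith
  have hr1 : r < 1 := by nlinarith
  have h1r : 0 < 1 - r ^ 2 := by linarith
  -- key inequality: 1/(1 - r²) < τ
  have hkey : 1 < τ * (1 - r ^ 2) := by
    rw [hr2]
    have : τ * (1 - (τ - 1) / (2 * τ)) = (τ + 1) / 2 := by
      field_simp; ring
    rw [this]; linarith
  set c : ℝ := r / (M + 1) with hcdef
  have hc0 : 0 < c := by positivity
  have hnorm : ∀ v, ‖(c • φE v : EuclideanSpace ℝ (Fin 2))‖ < r := by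
    intro v
    rw [norm_smul, Real.norm_eq_abs, abs_of_pos hc0]
    have h1 : c * ‖φE v‖ ≤ c * M := by
      apply mul_le_mul_of_nonneg_left (hMle v) hc0.le
    have h2 : c * M < r := by
      rw [hcdef, div_mul_eq_mul_div, div_lt_iff₀ (by linarith)]
      nlinarith
    linarith
  clear_value M r c
  clear hMdef hrdef hcdef
  refine ⟨fun v => c • φE v, 2 * Real.arsinh (c * R_E / (1 - r ^ 2)), ?_, ?_, ?_⟩
  · have h : 0 < c * R_E / (1 - r ^ 2) := by positivity
    have := Real.arsinh_lt_arsinh.mpr h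
    rw [Real.arsinh_zero] at this
    linarith
  · intro v; exact lt_trans (hnorm v) hr1
  · intro u v huv
    set p : EuclideanSpace ℝ (Fin 2) := c • φE u with hp
    set q : EuclideanSpace ℝ (Fin 2) := c • φE v with hq
    have hpq : ‖p - q‖ = c * ‖φE u - φE v‖ := by
      rw [hp, hq, ← smul_sub, norm_smul, Real.norm_eq_abs, abs_of_pos hc0]
    have hpn : ‖p‖ < r := hnorm u
    have hqn : ‖q‖ < r := hnorm v
    clear_value p q
    have hp2 : 1 - r ^ 2 < 1 - ‖p‖ ^ 2 := by
      have : ‖p‖ ^ 2 < r ^ 2 := by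
        apply pow_lt_pow_left₀ hpn (norm_nonneg _); norm_num
      linarith
    have hq2 : 1 - r ^ 2 < 1 - ‖q‖ ^ 2 := by
      have : ‖q‖ ^ 2 < r ^ 2 := by
        apply pow_lt_pow_left₀ hqn (norm_nonneg _); norm_num
      linarith
    have hp1 : 1 - ‖p‖ ^ 2 ≤ 1 := by
      have : 0 ≤ ‖p‖ ^ 2 := sq_nonneg _
      linarith
    have hq1 : 1 - ‖q‖ ^ 2 ≤ 1 := by
      have : 0 ≤ ‖q‖ ^ 2 := sq_nonneg _
      linarith
    set S : ℝ := Real.sqrt ((1 - ‖p‖ ^ 2) * (1 - ‖q‖ ^ 2)) with hSdef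
    have hS0 : 0 < S := Real.sqrt_pos.mpr (by nlinarith)
    clear_value S
    have hS1 : S ≤ 1 := by
      rw [hSdef]
      calc Real.sqrt ((1 - ‖p‖ ^ 2) * (1 - ‖q‖ ^ 2)) ≤ Real.sqrt 1 :=
            Real.sqrt_le_sqrt (by nlinarith)
        _ = 1 := Real.sqrt_one
    have hS2 : 1 - r ^ 2 ≤ S := by
      rw [hSdef]
      have : (1 - r ^ 2) = Real.sqrt ((1 - r ^ 2) ^ 2) := (Real.sqrt_sq h1r.le).symm
      rw [this]
      apply Real.sqrt_le_sqrt
      nlinarith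
    unfold poincareDist
    beta_reduce
    rw [← hp, ← hq, ← hSdef, hpq]
    constructor
    · intro hadj
      have hd : ‖φE u - φE v‖ ≤ R_E := (hrep u v huv).mp hadj
      have harg_le : c * ‖φE u - φE v‖ / S ≤ c * R_E / (1 - r ^ 2) := by
        exact div_le_div₀ (by positivity) (mul_le_mul_of_nonneg_left hd hc0.le) h1r hS2
      have := Real.arsinh_le_arsinh.mpr harg_le
      linarith
    · intro hle
      by_contra hadj
      have hd : τ * R_E < ‖φE u - φE v‖ := hgap u v huv hadj
      have harg_gt : c * R_E / (1 - r ^ 2) < c * ‖φE u - φE v‖ / S := by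
        have h1 : c * R_E / (1 - r ^ 2) < c * (τ * R_E) := by
          rw [div_lt_iff₀ h1r]
          have h := mul_lt_mul_of_pos_left hkey (mul_pos hc0 hRE)
          calc c * R_E = c * R_E * 1 := by ring
            _ < c * R_E * (τ * (1 - r ^ 2)) := h
            _ = c * (τ * R_E) * (1 - r ^ 2) := by ring
        have h2 : c * (τ * R_E) ≤ c * ‖φE u - φE v‖ :=
          mul_le_mul_of_nonneg_left hd.le hc0.le
        have h3 : c * ‖φE u - φE v‖ ≤ c * ‖φE u - φE v‖ / S := by
          rw [le_div_iff₀ hS0]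
          exact mul_le_of_le_one_right (by positivity) hS1
        linarith
      have := Real.arsinh_lt_arsinh.mpr harg_gt
      linarith
end

section
/- Let G be a graph and 𝒞 a collection of connected subgraphs of G such that for all vertices s, t there exists G' ∈ 𝒞 containing s and t with d_{G'}(s, t) ≤ c·d_G(s, t) or d_{G'}(s, t) ≤ d_G(s, t) + ℓ. Define d_𝒞(s, t) as the minimum of d_{G'}(s, t) over subgraphs G' ∈ 𝒞 containing both s and t. Then for every s ≠ t there exists a neighbor v of s in G with d_𝒞(v, t) < d_𝒞(s, t), and consequently greedily routing with respect to d_𝒞 from s to t produces a path of length at most d_𝒞(s, t), which is at most max(c·d_G(s, t), d_G(s, t) + ℓ). -/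
open SimpleGraph in
/-- Distance with respect to a graph cover: the minimum over the subgraphs in the
cover of the shortest-path distance within the subgraph. -/
noncomputable def coverDist {V : Type*} (𝒞 : Set (SimpleGraph V)) (s t : V) : ℕ∞ :=
  ⨅ G' ∈ 𝒞, G'.edist s t

open SimpleGraph in
lemma coverDist_le_edist {V : Type*} {𝒞 : Set (SimpleGraph V)} {G' : SimpleGraph V}
    (h : G' ∈ 𝒞) (s t : V) : coverDist 𝒞 s t ≤ G'.edist s t :=
  iInf₂_le G' h

open SimpleGraph in
lemma coverDist_ne_top {V : Type*} {G : SimpleGraph V} {𝒞 : Set (SimpleGraph V)} (c ℓ : ℕ)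
    (hcover : ∀ s t : V, ∃ G' ∈ 𝒞, G'.Reachable s t ∧
      (G'.edist s t ≤ c * G.edist s t ∨ G'.edist s t ≤ G.edist s t + ℓ))
    (s t : V) : coverDist 𝒞 s t ≠ ⊤ := by
  obtain ⟨G', hG', hr, -⟩ := hcover s t
  exact fun h => (edist_ne_top_iff_reachable.mpr hr)
    (le_antisymm le_top (h ▸ coverDist_le_edist hG' s t))

open SimpleGraph in
lemma coverDist_attained {V : Type*} {𝒞 : Set (SimpleGraph V)} {s t : V}
    (h : coverDist 𝒞 s t ≠ ⊤) :
    ∃ G' ∈ 𝒞, G'.edist s t = coverDist 𝒞 s t := by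
  have h1 : coverDist 𝒞 s t < coverDist 𝒞 s t + 1 :=
    ENat.lt_add_one_iff h |>.mpr le_rfl
  rw [coverDist, iInf_lt_iff] at h1
  obtain ⟨G', hlt⟩ := h1
  rw [iInf_lt_iff] at hlt
  obtain ⟨hG', hlt⟩ := hlt
  exact ⟨G', hG', le_antisymm ((ENat.lt_add_one_iff h).mp hlt)
    (coverDist_le_edist hG' s t)⟩

open SimpleGraph in
lemma coverDist_step {V : Type*} {G : SimpleGraph V} {𝒞 : Set (SimpleGraph V)}
    (hsub : ∀ G' ∈ 𝒞, G' ≤ G) {c ℓ : ℕ}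
    (hcover : ∀ s t : V, ∃ G' ∈ 𝒞, G'.Reachable s t ∧
      (G'.edist s t ≤ c * G.edist s t ∨ G'.edist s t ≤ G.edist s t + ℓ)) :
    ∀ s t : V, s ≠ t → ∃ v : V, G.Adj s v ∧ coverDist 𝒞 v t < coverDist 𝒞 s t := by
  intro s t hst
  obtain ⟨G', hG', hEq⟩ := coverDist_attained (coverDist_ne_top c ℓ hcover s t)
  have hne : G'.edist s t ≠ ⊤ := hEq ▸ coverDist_ne_top c ℓ hcover s t
  obtain ⟨p, hp⟩ := exists_walk_of_edist_ne_top hne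
  cases p with
  | nil => exact absurd rfl hst
  | cons hadj q =>
    rename_i v
    refine ⟨v, hsub G' hG' hadj, ?_⟩
    have h1 : coverDist 𝒞 v t ≤ q.length := le_trans (coverDist_le_edist hG' v t) q.edist_le
    calc coverDist 𝒞 v t ≤ (q.length : ℕ∞) := h1
      _ < (q.length : ℕ∞) + 1 := ENat.lt_add_one_iff (by simp) |>.mpr le_rfl
      _ = G'.edist s t := by rw [← hp, Walk.length_cons]; push_cast; ring
      _ = coverDist 𝒞 s t := hEq

open SimpleGraph in
theorem greedy_routing_graph_cover {V : Type*} (G : SimpleGraph V)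
    (𝒞 : Set (SimpleGraph V)) (hsub : ∀ G' ∈ 𝒞, G' ≤ G) (c ℓ : ℕ)
    (hcover : ∀ s t : V, ∃ G' ∈ 𝒞, G'.Reachable s t ∧
      (G'.edist s t ≤ c * G.edist s t ∨ G'.edist s t ≤ G.edist s t + ℓ)) :
    (∀ s t : V, s ≠ t → ∃ v : V, G.Adj s v ∧ coverDist 𝒞 v t < coverDist 𝒞 s t) ∧
    (∀ s t : V, ∃ p : G.Walk s t, (p.length : ℕ∞) ≤ coverDist 𝒞 s t) ∧
    (∀ s t : V, coverDist 𝒞 s t ≤ max (c * G.edist s t) (G.edist s t + ℓ)) := by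
  refine ⟨coverDist_step hsub hcover, ?_, ?_⟩
  · -- greedy routing walk
    have key : ∀ n : ℕ, ∀ s t : V, coverDist 𝒞 s t ≤ (n : ℕ∞) →
        ∃ p : G.Walk s t, (p.length : ℕ∞) ≤ coverDist 𝒞 s t := by
      intro n
      induction n with
      | zero =>
        intro s t h
        have h0 : coverDist 𝒞 s t = 0 := le_antisymm (by simpa using h) zero_le
        have : s = t := by
          obtain ⟨G', hG', hEq⟩ := coverDist_attained (𝒞 := 𝒞) (s := s) (t := t) (by simp [h0])
          exact edist_eq_zero_iff.mp (hEq.trans h0)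
        subst this
        exact ⟨Walk.nil, by simp⟩
      | succ m ih =>
        intro s t h
        by_cases hst : s = t
        · subst hst; exact ⟨Walk.nil, by simp⟩
        · obtain ⟨v, hadj, hlt⟩ := coverDist_step hsub hcover s t hst
          have hv : coverDist 𝒞 v t ≤ (m : ℕ∞) := by
            have := lt_of_lt_of_le hlt h
            rwa [show ((m + 1 : ℕ) : ℕ∞) = (m : ℕ∞) + 1 by push_cast; rfl,
              ENat.lt_add_one_iff (by simp)] at this
          obtain ⟨q, hq⟩ := ih v t hv
          refine ⟨Walk.cons hadj q, ?_⟩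
          have h1 : coverDist 𝒞 v t + 1 ≤ coverDist 𝒞 s t :=
            Order.add_one_le_of_lt hlt
          calc ((Walk.cons hadj q).length : ℕ∞) = (q.length : ℕ∞) + 1 := by
                simp [Walk.length_cons]
            _ ≤ coverDist 𝒞 v t + 1 := add_le_add_left hq 1
            _ ≤ coverDist 𝒞 s t := h1
    intro s t
    have hne := coverDist_ne_top c ℓ hcover s t
    lift coverDist 𝒞 s t to ℕ using hne with n hn
    exact key n s t (le_of_eq hn.symm) |>.imp fun p hp => hn ▸ hp
  · intro s t
    obtain ⟨G', hG', hr, hd⟩ := hcover s t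
    have h1 := coverDist_le_edist hG' s t
    rcases hd with hd | hd
    · exact le_trans h1 (le_trans hd (le_max_left _ _))
    · exact le_trans h1 (le_trans hd (le_max_right _ _))
end

section
/- Let G be a graph, u, v vertices, and H an induced subgraph of G containing all vertices of some shortest u-v path P in G. Let T be a shortest-path tree in H rooted at a vertex t such that T contains u and v and distances in T from t agree with distances in H. Then for every vertex w of T lying on P, d_T(u, v) ≤ d_G(u, v) + 2·d_H(t, w). -/
open SimpleGraph in
theorem shortest_path_tree_detour_bound {V : Type*} (G : SimpleGraph V) (S : Set V)
    (H : SimpleGraph V)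
    (hH : ∀ x y : V, H.Adj x y ↔ x ∈ S ∧ y ∈ S ∧ G.Adj x y)  -- `H` is induced on `S`
    (u v t w : V) (P : G.Walk u v)
    (hP : (P.length : ℕ∞) = G.edist u v)                      -- `P` is a shortest `u`-`v` path
    (hPS : ∀ x ∈ P.support, x ∈ S)                            -- `H` contains all vertices of `P`
    (T : SimpleGraph V) (hTH : T ≤ H) (hacyclic : T.IsAcyclic)
    (htu : T.Reachable t u) (htv : T.Reachable t v)           -- `T` contains `u` and `v`
    (hagree : ∀ x : V, T.Reachable t x → T.edist t x = H.edist t x)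
    (hw : w ∈ P.support) (htw : T.Reachable t w) :            -- `w` lies in `T` and on `P`
    T.edist u v ≤ G.edist u v + 2 * H.edist t w := by
  classical
  have hsub : ∀ e ∈ P.edges, e ∈ H.edgeSet := by
    intro e he
    induction e using Sym2.ind with
    | _ x y =>
      have hx : x ∈ P.support := P.fst_mem_support_of_mem_edges he
      have hy : y ∈ P.support := P.snd_mem_support_of_mem_edges he
      have hadj : G.Adj x y := P.adj_of_mem_edges he
      exact (hH x y).mpr ⟨hPS x hx, hPS y hy, hadj⟩
  set P1 := P.takeUntil w hw with hP1
  set P2 := P.dropUntil w hw with hP2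
  have hsub1 : ∀ e ∈ P1.edges, e ∈ H.edgeSet := fun e he =>
    hsub e (P.edges_takeUntil_subset hw he)
  have hsub2 : ∀ e ∈ P2.edges, e ∈ H.edgeSet := fun e he =>
    hsub e (P.edges_dropUntil_subset hw he)
  have hlen : P.length = P1.length + P2.length := by
    conv_lhs => rw [← P.take_spec hw]
    exact SimpleGraph.Walk.length_append _ _
  have h1 : H.edist u w ≤ (P1.length : ℕ∞) := by
    have := SimpleGraph.Walk.edist_le (P1.transfer H hsub1)
    simpa [SimpleGraph.Walk.length_transfer] using this
  have h2 : H.edist w v ≤ (P2.length : ℕ∞) := by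
    have := SimpleGraph.Walk.edist_le (P2.transfer H hsub2)
    simpa [SimpleGraph.Walk.length_transfer] using this
  calc T.edist u v ≤ T.edist u t + T.edist t v := SimpleGraph.edist_triangle
    _ = T.edist t u + T.edist t v := by rw [SimpleGraph.edist_comm]
    _ = H.edist t u + H.edist t v := by rw [hagree u htu, hagree v htv]
    _ ≤ (H.edist t w + H.edist w u) + (H.edist t w + H.edist w v) := by
        gcongr <;> exact SimpleGraph.edist_triangle
    _ = (H.edist w u + H.edist w v) + 2 * H.edist t w := by ring
    _ ≤ ((P1.length : ℕ∞) + (P2.length : ℕ∞)) + 2 * H.edist t w := by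
        have h1' : H.edist w u ≤ (P1.length : ℕ∞) := by
          rw [SimpleGraph.edist_comm]; exact h1
        exact add_le_add (add_le_add h1' h2) le_rfl
    _ = G.edist u v + 2 * H.edist t w := by
        rw [← hP, hlen]; push_cast; ring
end
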